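/- Let k ≥ 1, let G be a k-edge-connected finite simple graph on V, fix a root r ∈ V, and let 𝓛 be a maximal edge-covering laminar family of k-cuts avoiding r. If u is a snug vertex with snug shores (S₁, S₂), then S₁ ∈ 𝓛 and S₂ ∈ 𝓛. -/

import Mathlib

open Finset

variable {V : Type*} [Fintype V] [DecidableEq V]

/-- `Crosses S e`: exactly one endpoint of the edge/link `e` lies in `S`. -/
def Crosses (S : Finset V) (e : Sym2 V) : Prop :=
  ∃ x y : V, e = s(x, y) ∧ x ∈ S ∧ y ∉ S

instance (S : Finset V) : DecidablePred (Crosses S) := fun e =>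
  decidable_of_iff (∃ x y : V, e = s(x, y) ∧ x ∈ S ∧ y ∉ S) Iff.rfl

/-- The cut `δ(S)`: edges of `G` with exactly one endpoint in `S`. -/
def cutEdges (G : SimpleGraph V) [DecidableRel G.Adj] (S : Finset V) :
    Finset (Sym2 V) :=
  G.edgeFinset.filter fun e => Crosses S e

/-- `G` is `k`-edge-connected: every nonempty proper cut has at least `k` crossing edges. -/
def EdgeConnected (G : SimpleGraph V) [DecidableRel G.Adj] (k : ℕ) : Prop :=
  ∀ S : Finset V, S.Nonempty → S ≠ Finset.univ → k ≤ (cutEdges G S).card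

/-- `S` is a `k`-cut: a nonempty proper vertex set with exactly `k` crossing edges. -/
def IsCut (G : SimpleGraph V) [DecidableRel G.Adj] (k : ℕ) (S : Finset V) : Prop :=
  S.Nonempty ∧ S ≠ Finset.univ ∧ (cutEdges G S).card = k

/-- `(S₁, S₂)` are snug shores for `v` (with respect to the root `r`):
two `k`-cuts avoiding `r` with `v ∉ S₁` and `S₂ = S₁ ∪ {v}`. -/
def SnugShores (G : SimpleGraph V) [DecidableRel G.Adj] (k : ℕ) (r v : V)
    (S₁ S₂ : Finset V) : Prop :=
  IsCut G k S₁ ∧ IsCut G k S₂ ∧ r ∉ S₁ ∧ r ∉ S₂ ∧ v ∉ S₁ ∧ S₂ = insert v S₁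

/-- `v` is a snug vertex (with respect to the root `r`). -/
def Snug (G : SimpleGraph V) [DecidableRel G.Adj] (k : ℕ) (r v : V) : Prop :=
  v ≠ r ∧ k + 1 ≤ G.degree v ∧ ∃ S₁ S₂ : Finset V, SnugShores G k r v S₁ S₂

/-- A snug chain: snug vertices `u 0, …, u t` together with `k`-cuts
`S 0, …, S (t+1)` such that `(S i, S (i+1))` are snug shores for `u i`. -/
def IsSnugChain (G : SimpleGraph V) [DecidableRel G.Adj] (k : ℕ) (r : V)
    (t : ℕ) (u : ℕ → V) (S : ℕ → Finset V) : Prop :=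
  ∀ i ≤ t, Snug G k r (u i) ∧ SnugShores G k r (u i) (S i) (S (i + 1))

/-- `L` is a maximal edge-covering laminar family of `k`-cuts avoiding `r`. -/
def MaxLaminarFamily (G : SimpleGraph V) [DecidableRel G.Adj] (k : ℕ) (r : V)
    (L : Finset (Finset V)) : Prop :=
  (∀ A ∈ L, IsCut G k A ∧ r ∉ A) ∧
  (∀ A ∈ L, ∀ B ∈ L, A ⊆ B ∨ B ⊆ A ∨ A ∩ B = ∅) ∧
  (∀ e ∈ G.edgeSet, ∃ A ∈ L, Crosses A e) ∧
  (∀ T : Finset V, IsCut G k T → r ∉ T →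
    (∀ A ∈ L, T ⊆ A ∨ A ⊆ T ∨ T ∩ A = ∅) → T ∈ L)

lemma crosses_iff (X : Finset V) (x y : V) :
    Crosses X s(x, y) ↔ (x ∈ X ∧ y ∉ X) ∨ (y ∈ X ∧ x ∉ X) := by
  constructor
  · rintro ⟨a, b, hab, ha, hb⟩
    rw [Sym2.eq_iff] at hab
    rcases hab with ⟨rfl, rfl⟩ | ⟨rfl, rfl⟩ <;> tauto
  · rintro (⟨h1, h2⟩ | ⟨h1, h2⟩)
    · exact ⟨x, y, rfl, h1, h2⟩
    · exact ⟨y, x, Sym2.eq_swap.symm, h1, h2⟩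

lemma cut_submod_inter_union (G : SimpleGraph V) [DecidableRel G.Adj] (S T : Finset V) :
    (cutEdges G (S ∩ T)).card + (cutEdges G (S ∪ T)).card ≤
      (cutEdges G S).card + (cutEdges G T).card := by
  classical
  simp only [cutEdges, Finset.card_filter]
  rw [← Finset.sum_add_distrib, ← Finset.sum_add_distrib]
  apply Finset.sum_le_sum
  intro e _
  induction e using Sym2.inductionOn with
  | hf x y =>
    simp only [crosses_iff, Finset.mem_inter, Finset.mem_union]
    by_cases hxS : x ∈ S <;> by_cases hxT : x ∈ T <;>
      by_cases hyS : y ∈ S <;> by_cases hyT : y ∈ T <;>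
      simp [hxS, hxT, hyS, hyT]

lemma cut_submod_diff (G : SimpleGraph V) [DecidableRel G.Adj] (S T : Finset V) :
    (cutEdges G (S \ T)).card + (cutEdges G (T \ S)).card ≤
      (cutEdges G S).card + (cutEdges G T).card := by
  classical
  simp only [cutEdges, Finset.card_filter]
  rw [← Finset.sum_add_distrib, ← Finset.sum_add_distrib]
  apply Finset.sum_le_sum
  intro e _
  induction e using Sym2.inductionOn with
  | hf x y =>
    simp only [crosses_iff, Finset.mem_sdiff]
    by_cases hxS : x ∈ S <;> by_cases hxT : x ∈ T <;>
      by_cases hyS : y ∈ S <;> by_cases hyT : y ∈ T <;>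
      simp [hxS, hxT, hyS, hyT]

lemma cut_singleton (G : SimpleGraph V) [DecidableRel G.Adj] (u : V) :
    (cutEdges G {u}).card = G.degree u := by
  rw [← SimpleGraph.card_incidenceFinset_eq_degree]
  congr 1
  ext e
  simp only [cutEdges, Finset.mem_filter, SimpleGraph.mem_incidenceFinset,
    SimpleGraph.incidenceSet, Set.mem_setOf_eq]
  induction e using Sym2.inductionOn with
  | hf x y =>
    simp only [SimpleGraph.mem_edgeFinset, crosses_iff, Finset.mem_singleton,
      Sym2.mem_iff]
    constructor
    · rintro ⟨he, (⟨rfl, h2⟩ | ⟨rfl, h2⟩)⟩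
      · exact ⟨he, Or.inl rfl⟩
      · exact ⟨he, Or.inr rfl⟩
    · rintro ⟨he, (rfl | rfl)⟩
      · exact ⟨he, Or.inl ⟨rfl, fun h => (G.mem_edgeSet.mp he).ne h.symm⟩⟩
      · exact ⟨he, Or.inr ⟨rfl, fun h => (G.mem_edgeSet.mp he).ne' h.symm⟩⟩

/-- Snug shores belong to every maximal edge-covering laminar family of
`k`-cuts avoiding the root. -/
theorem snugShores_mem_maxLaminar
    (k : ℕ) (hk : 1 ≤ k) (G : SimpleGraph V) [DecidableRel G.Adj]
    (hG : EdgeConnected G k) (r : V)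
    (L : Finset (Finset V)) (hL : MaxLaminarFamily G k r L)
    (u : V) (hu : Snug G k r u)
    (S₁ S₂ : Finset V) (hs : SnugShores G k r u S₁ S₂) :
    S₁ ∈ L ∧ S₂ ∈ L := by
  obtain ⟨hc1, hc2, hr1, hr2, hu1, hS2eq⟩ := hs
  obtain ⟨hur, hdeg, -⟩ := hu
  obtain ⟨hL1, hL2, hL3, hL4⟩ := hL
  have hnuniv : ∀ X : Finset V, r ∉ X → X ≠ univ :=
    fun X hrX h => hrX (h.symm ▸ Finset.mem_univ r)
  have hge : ∀ X : Finset V, X.Nonempty → r ∉ X → k ≤ (cutEdges G X).card :=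
    fun X hX hrX => hG X hX (hnuniv X hrX)
  have hdu : k + 1 ≤ (cutEdges G {u}).card := by
    rw [cut_singleton]; exact hdeg
  have hcS1 : (cutEdges G S₁).card = k := hc1.2.2
  have hcS2 : (cutEdges G S₂).card = k := hc2.2.2
  have huS2 : u ∈ S₂ := hS2eq ▸ mem_insert_self u S₁
  have hS1S2 : S₁ ⊆ S₂ := hS2eq ▸ subset_insert u S₁
  -- key contradiction step
  have key : ∀ X : Finset V, (cutEdges G X).card ≤ k → X \ S₁ = {u} →
      (S₁ \ X).Nonempty → False := by
    intro X hX hXd hne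
    have h := cut_submod_diff G X S₁
    rw [hXd, hcS1] at h
    have h2 : k ≤ (cutEdges G (S₁ \ X)).card :=
      hge _ hne (fun hh => hr1 (mem_sdiff.mp hh).1)
    omega
  -- scenario 1 : A crosses S₁
  have crossS1 : ∀ A : Finset V, (cutEdges G A).card = k → r ∉ A →
      ¬ S₁ ⊆ A → ¬ A ⊆ S₁ → (S₁ ∩ A).Nonempty → False := by
    intro A hcA hrA h1 h2 h3
    have hS1A : (S₁ \ A).Nonempty := sdiff_nonempty.mpr h1
    by_cases huA : u ∈ A
    · by_cases hAS2 : A ⊆ S₂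
      · -- A \ S₁ = {u}
        have hAd : A \ S₁ = {u} := by
          apply Finset.Subset.antisymm
          · intro x hx
            rw [mem_singleton]
            have hx' := hAS2 (mem_sdiff.mp hx).1
            rw [hS2eq, mem_insert] at hx'
            rcases hx' with h | h
            · exact h
            · exact absurd h (mem_sdiff.mp hx).2
          · intro x hx
            rw [mem_singleton] at hx
            subst hx
            exact mem_sdiff.mpr ⟨huA, hu1⟩
        have h := cut_submod_diff G A S₁
        rw [hAd, hcA, hcS1] at h
        have h2' := hge _ hS1A (fun hh => hr1 (mem_sdiff.mp hh).1)
        omega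
      · have hun : k ≤ (cutEdges G (S₂ ∪ A)).card :=
          hge _ ⟨u, mem_union_left _ huS2⟩
            (fun hh => (mem_union.mp hh).elim hr2 hrA)
        have h := cut_submod_inter_union G S₂ A
        rw [hcS2, hcA] at h
        have hXd : (S₂ ∩ A) \ S₁ = {u} := by
          ext x
          simp only [hS2eq, mem_sdiff, mem_inter, mem_insert, mem_singleton]
          constructor
          · rintro ⟨⟨h | h, _⟩, hx2⟩
            · exact h
            · exact absurd h hx2
          · rintro rfl
            exact ⟨⟨Or.inl rfl, huA⟩, hu1⟩
        have hSd : S₁ \ (S₂ ∩ A) = S₁ \ A := by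
          ext x
          simp only [mem_sdiff, mem_inter, not_and]
          constructor
          · rintro ⟨hx1, hx2⟩
            exact ⟨hx1, fun hxa => hx2 (hS1S2 hx1) hxa⟩
          · rintro ⟨hx1, hx2⟩
            exact ⟨hx1, fun _ => hx2⟩
        exact key (S₂ ∩ A) (by omega) hXd (hSd ▸ hS1A)
    · -- u ∉ A
      have hAS2' : ¬ A ⊆ S₂ := by
        intro h
        apply h2
        intro x hx
        have hx' := h hx
        rw [hS2eq, mem_insert] at hx'
        rcases hx' with rfl | h'
        · exact absurd hx huA
        · exact h'
      have hAn : (A \ S₂).Nonempty := sdiff_nonempty.mpr hAS2'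
      have h := cut_submod_diff G S₂ A
      rw [hcS2, hcA] at h
      have h2' := hge _ hAn (fun hh => hrA (mem_sdiff.mp hh).1)
      have hXd : (S₂ \ A) \ S₁ = {u} := by
        ext x
        simp only [hS2eq, mem_sdiff, mem_insert, mem_singleton]
        constructor
        · rintro ⟨⟨h' | h', _⟩, hx2⟩
          · exact h'
          · exact absurd h' hx2
        · rintro rfl
          exact ⟨⟨Or.inl rfl, huA⟩, hu1⟩
      have hSd : S₁ \ (S₂ \ A) = S₁ ∩ A := by
        ext x
        simp only [mem_sdiff, mem_inter, not_and, not_not]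
        constructor
        · rintro ⟨hx1, hx2⟩
          exact ⟨hx1, hx2 (hS1S2 hx1)⟩
        · rintro ⟨hx1, hx2⟩
          exact ⟨hx1, fun _ => hx2⟩
      exact key (S₂ \ A) (by omega) hXd (hSd ▸ h3)
  -- scenario 2 : A crosses S₂ but is laminar with S₁
  have crossS2 : ∀ A : Finset V, (cutEdges G A).card = k → r ∉ A →
      (S₁ ⊆ A ∨ A ⊆ S₁ ∨ S₁ ∩ A = ∅) →
      ¬ S₂ ⊆ A → ¬ A ⊆ S₂ → (S₂ ∩ A).Nonempty → False := by
    intro A hcA hrA hlam hn1 hn2 hn3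
    rcases hlam with hS1A | hAS1 | hdisj
    · -- S₁ ⊆ A
      have huA : u ∉ A := fun h =>
        hn1 (by rw [hS2eq]; exact insert_subset h hS1A)
      have hXd : S₂ \ A = {u} := by
        ext x
        simp only [hS2eq, mem_sdiff, mem_insert, mem_singleton]
        constructor
        · rintro ⟨h' | h', hx2⟩
          · exact h'
          · exact absurd (hS1A h') hx2
        · rintro rfl
          exact ⟨Or.inl rfl, huA⟩
      have hAn : (A \ S₂).Nonempty := sdiff_nonempty.mpr hn2
      have h := cut_submod_diff G S₂ A
      rw [hXd, hcS2, hcA] at h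
      have h2' := hge _ hAn (fun hh => hrA (mem_sdiff.mp hh).1)
      omega
    · exact hn2 (hAS1.trans hS1S2)
    · -- S₁ ∩ A = ∅
      have hd' : ∀ x, x ∈ S₁ → x ∉ A := fun x hx hxa =>
        (Finset.eq_empty_iff_forall_notMem.mp hdisj x) (mem_inter.mpr ⟨hx, hxa⟩)
      have hsub : S₂ ∩ A ⊆ {u} := by
        intro x hx
        rw [mem_singleton]
        obtain ⟨hx2, hxa⟩ := mem_inter.mp hx
        rw [hS2eq, mem_insert] at hx2
        rcases hx2 with h' | h'
        · exact h'
        · exact absurd hxa (hd' x h')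
      have hXd : S₂ ∩ A = {u} := by
        obtain ⟨y, hy⟩ := hn3
        have := hsub hy
        rw [mem_singleton] at this
        subst this
        exact Finset.Subset.antisymm hsub
          (singleton_subset_iff.mpr hy)
      have hun : k ≤ (cutEdges G (S₂ ∪ A)).card :=
        hge _ ⟨u, mem_union_left _ huS2⟩
          (fun hh => (mem_union.mp hh).elim hr2 hrA)
      have h := cut_submod_inter_union G S₂ A
      rw [hXd, hcS2, hcA] at h
      omega
  -- conclusion
  have m1 : S₁ ∈ L := by
    apply hL4 S₁ hc1 hr1
    intro A hA
    by_contra hcon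
    push_neg at hcon
    obtain ⟨hn1, hn2, hn3⟩ := hcon
    obtain ⟨hAc, hrA⟩ := hL1 A hA
    exact crossS1 A hAc.2.2 hrA hn1 hn2 hn3
  refine ⟨m1, ?_⟩
  apply hL4 S₂ hc2 hr2
  intro A hA
  by_contra hcon
  push_neg at hcon
  obtain ⟨hn1, hn2, hn3⟩ := hcon
  obtain ⟨hAc, hrA⟩ := hL1 A hA
  by_cases hlam : S₁ ⊆ A ∨ A ⊆ S₁ ∨ S₁ ∩ A = ∅
  · exact crossS2 A hAc.2.2 hrA hlam hn1 hn2 hn3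
  · push_neg at hlam
    exact crossS1 A hAc.2.2 hrA hlam.1 hlam.2.1
      hlam.2.2
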